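/- Let V be a real vector space with a symmetric bilinear form B, and let a₁, …, a_{n+1} (n ≥ 1) be a positively correlated null family (B(aᵢ,aᵢ) = 0, B(aᵢ,aⱼ) = 1/2 for i ≠ j). For each i define the reciprocal vector aⁱ := (2/n)·( (Σ_{k ≠ i} a_k) − (n−1)·aᵢ ). Then B(aⁱ, aⱼ) = δᵢⱼ for all i, j (that is, a¹, …, a^{n+1} is the reciprocal frame of a₁, …, a_{n+1}). This is the algebraic content of the gradient decomposition formula ∇ = (2/n)(∨∇ − (n−1)∇̂). -/

import Mathlib

/-- for a positively correlated null family `a₁,…,a_{n+1}` (`n ≥ 1`), the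
vectors `aⁱ = (2/n)·((Σ_{k ≠ i} a_k) − (n−1)aᵢ)` form the reciprocal frame:
`B(aⁱ, aⱼ) = δᵢⱼ`. -/
theorem stmt_6 {V : Type*} [AddCommGroup V] [Module ℝ V]
    (B : LinearMap.BilinForm ℝ V) (hB : B.IsSymm)
    (n : ℕ) (hn : 1 ≤ n) (a : Fin (n + 1) → V)
    (hnull : ∀ i, B (a i) (a i) = 0)
    (hcorr : ∀ i j, i ≠ j → B (a i) (a j) = 1 / 2)
    (r : Fin (n + 1) → V)
    (hr : ∀ i, r i = (2 / (n : ℝ)) •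
      ((∑ k ∈ Finset.univ.erase i, a k) - ((n : ℝ) - 1) • a i)) :
    ∀ i j, B (r i) (a j) = if i = j then 1 else 0 := by
  intro i j
  have hn0 : (n : ℝ) ≠ 0 := by positivity
  rw [hr i]
  simp only [map_smul, map_sub, map_sum, LinearMap.smul_apply, LinearMap.sub_apply,
    LinearMap.sum_apply, smul_eq_mul]
  by_cases hij : i = j
  · subst hij
    have hS : ∑ k ∈ Finset.univ.erase i, B (a k) (a i) = (n : ℝ) / 2 := by
      rw [Finset.sum_congr rfl (fun k hk => hcorr k i (Finset.mem_erase.mp hk).1)]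
      rw [Finset.sum_const]
      have : (Finset.univ.erase i).card = n := by
        rw [Finset.card_erase_of_mem (Finset.mem_univ i)]
        simp
      rw [this]
      push_cast
      ring
    rw [hS, hnull i, if_pos rfl]
    field_simp
    ring
  · have hjmem : j ∈ Finset.univ.erase i := Finset.mem_erase.mpr ⟨Ne.symm hij, Finset.mem_univ j⟩
    have hS : ∑ k ∈ Finset.univ.erase i, B (a k) (a j) = ((n : ℝ) - 1) / 2 := by
      rw [← Finset.add_sum_erase _ _ hjmem, hnull j, zero_add]
      rw [Finset.sum_congr rfl (fun k hk => hcorr k j (Finset.mem_erase.mp hk).1)]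
      rw [Finset.sum_const]
      have : ((Finset.univ.erase i).erase j).card = n - 1 := by
        rw [Finset.card_erase_of_mem hjmem, Finset.card_erase_of_mem (Finset.mem_univ i)]
        simp
      rw [this]
      have : ((n - 1 : ℕ) : ℝ) = (n : ℝ) - 1 := by
        push_cast [hn]; ring
      rw [nsmul_eq_mul, this]
      ring
    rw [hS, hcorr i j hij]
    rw [if_neg hij]
    ring
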